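/- Consider Phragmén's sequential rule on the election with disjoint candidate sets A = {a_1,…,a_k} and B = {b_1,…,b_k}, voters v_{i,j} (i,j ∈ [k]) approving {a_i, b_j}, one voter v^s with empty approval set, and tie-breaking order b_1 ≻ ⋯ ≻ b_k ≻ a_1 ≻ ⋯ ≻ a_k. Then Phragmén outputs B. If instead v^s approves a_1, then Phragmén outputs A: a_1 is purchased at time 1/(k+1) and then a_2,…,a_k are purchased at time 1/k, since for each b_i one of its k supporters has already paid for a_1 at time 1/(k+1). Hence Phragmén is k-Add-robust. -/

import Mathlib

open Finset

/-- The set of voters approving candidate `c`. -/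
def supporters {V C : Type*} [Fintype V] [DecidableEq C]
    (A : V → Finset C) (c : C) : Finset V :=
  Finset.univ.filter (fun v => c ∈ A v)

/-- One step of Phragmén's sequential rule. The state is a pair: the selected
committee and the voters' current balances. Candidate `c` is purchased as soon
as its supporters jointly hold one unit of money; `δ` is the additional time
needed, which must be minimal among unselected candidates with supporters, with
ties broken by the order `tb` (smaller = preferred). Supporters of `c` pay
(balances reset to 0), all other voters keep earning. -/
def PhragmenStep {V C : Type*} [Fintype V] [DecidableEq C]
    (A : V → Finset C) (tb : C → ℕ)
    (s s' : Finset C × (V → ℚ)) : Prop :=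
  ∃ (c : C) (δ : ℚ),
    c ∉ s.1 ∧ (supporters A c).Nonempty ∧
    δ = (1 - ∑ v ∈ supporters A c, s.2 v) / ((supporters A c).card : ℚ) ∧
    (∀ d, d ∉ s.1 → (supporters A d).Nonempty →
      δ ≤ (1 - ∑ v ∈ supporters A d, s.2 v) / ((supporters A d).card : ℚ)) ∧
    (∀ d, d ∉ s.1 → (supporters A d).Nonempty →
      (1 - ∑ v ∈ supporters A d, s.2 v) / ((supporters A d).card : ℚ) = δ →
      tb c ≤ tb d) ∧
    s'.1 = insert c s.1 ∧
    s'.2 = fun v => if c ∈ A v then 0 else s.2 v + δ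

/-- `PhragmenChain A tb n s`: state `s` is reached after `n` purchases of
Phragmén's sequential rule, starting from the empty committee and zero balances. -/
def PhragmenChain {V C : Type*} [Fintype V] [DecidableEq C]
    (A : V → Finset C) (tb : C → ℕ) : ℕ → Finset C × (V → ℚ) → Prop
  | 0, s => s.1 = ∅ ∧ s.2 = fun _ => 0
  | n + 1, s => ∃ s', PhragmenChain A tb n s' ∧ PhragmenStep A tb s' s

/-- Candidates `a_1, …, a_k` (left) and `b_1, …, b_k` (right). -/
abbrev PCand (k : ℕ) := Fin k ⊕ Fin k

def pAset (k : ℕ) : Finset (PCand k) := Finset.univ.image Sum.inl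
def pBset (k : ℕ) : Finset (PCand k) := Finset.univ.image Sum.inr

/-- Tie-breaking order `b_1 ≻ ⋯ ≻ b_k ≻ a_1 ≻ ⋯ ≻ a_k` (smaller = preferred). -/
def pTb (k : ℕ) : PCand k → ℕ := Sum.elim (fun i => k + (i : ℕ)) (fun j => (j : ℕ))

/-- Voters `v_{i,j}` approving `{a_i, b_j}` and a voter `v^s` with empty approval set. -/
def pProfile (k : ℕ) : (Fin k × Fin k) ⊕ Unit → Finset (PCand k)
  | Sum.inl (i, j) => {Sum.inl i, Sum.inr j}
  | Sum.inr _ => ∅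

/-- The profile after adding an approval for `a_1` to `v^s`'s vote. -/
def pProfile' (k : ℕ) (hk : 0 < k) : (Fin k × Fin k) ⊕ Unit → Finset (PCand k) :=
  Function.update (pProfile k) (Sum.inr ())
    (insert (Sum.inl ⟨0, hk⟩) (pProfile k (Sum.inr ())))

namespace PhragAux

abbrev PV (k : ℕ) := (Fin k × Fin k) ⊕ Unit

def rowEmb (k : ℕ) (i : Fin k) : Fin k ↪ PV k :=
  ⟨fun j => Sum.inl (i, j), fun a b h => by simpa using h⟩

def colEmb (k : ℕ) (j : Fin k) : Fin k ↪ PV k :=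
  ⟨fun i => Sum.inl (i, j), fun a b h => by simpa using h⟩

lemma rowEmb_apply (k : ℕ) (i j : Fin k) : rowEmb k i j = Sum.inl (i, j) := rfl

lemma colEmb_apply (k : ℕ) (j i : Fin k) : colEmb k j i = Sum.inl (i, j) := rfl

lemma mem_supporters {V C : Type*} [Fintype V] [DecidableEq C]
    (A : V → Finset C) (c : C) (v : V) : v ∈ supporters A c ↔ c ∈ A v := by
  simp [supporters]

lemma supA {k : ℕ} (i : Fin k) :
    supporters (pProfile k) (Sum.inl i) = Finset.univ.map (rowEmb k i) := by
  ext v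
  rcases v with ⟨i', j'⟩ | u
  · simp [mem_supporters, pProfile, rowEmb_apply, eq_comm, Prod.ext_iff]
  · simp [mem_supporters, pProfile, rowEmb_apply]

lemma supB {k : ℕ} (j : Fin k) :
    supporters (pProfile k) (Sum.inr j) = Finset.univ.map (colEmb k j) := by
  ext v
  rcases v with ⟨i', j'⟩ | u
  · simp [mem_supporters, pProfile, colEmb_apply, eq_comm, Prod.ext_iff]
  · simp [mem_supporters, pProfile, colEmb_apply]

lemma pProfile'_inl {k : ℕ} (hk : 0 < k) (p : Fin k × Fin k) :
    pProfile' k hk (Sum.inl p) = pProfile k (Sum.inl p) := by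
  simp [pProfile', Function.update]

lemma pProfile'_inr {k : ℕ} (hk : 0 < k) (u : Unit) :
    pProfile' k hk (Sum.inr u) = {Sum.inl ⟨0, hk⟩} := by
  cases u; simp [pProfile', pProfile]

lemma supA'0 {k : ℕ} (hk : 0 < k) :
    supporters (pProfile' k hk) (Sum.inl ⟨0, hk⟩)
      = insert (Sum.inr ()) (Finset.univ.map (rowEmb k ⟨0, hk⟩)) := by
  ext v
  rcases v with ⟨i', j'⟩ | u
  · simp [mem_supporters, pProfile'_inl, pProfile, rowEmb_apply, eq_comm, Prod.ext_iff]
  · cases u; simp [supporters, pProfile'_inr, rowEmb]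

lemma supA' {k : ℕ} (hk : 0 < k) (i : Fin k) (hi : (i : ℕ) ≠ 0) :
    supporters (pProfile' k hk) (Sum.inl i) = Finset.univ.map (rowEmb k i) := by
  ext v
  rcases v with ⟨i', j'⟩ | u
  · simp [mem_supporters, pProfile'_inl, pProfile, rowEmb_apply, eq_comm, Prod.ext_iff]
  · cases u
    simp only [supporters, pProfile'_inr, Finset.mem_filter, Finset.mem_univ, true_and,
      Finset.mem_singleton, Finset.mem_map]
    constructor
    · rintro h; exact absurd h (by simp [Fin.ext_iff]; omega)
    · rintro ⟨a, h⟩; exact absurd h (by simp [rowEmb])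

lemma supB' {k : ℕ} (hk : 0 < k) (j : Fin k) :
    supporters (pProfile' k hk) (Sum.inr j) = Finset.univ.map (colEmb k j) := by
  ext v
  rcases v with ⟨i', j'⟩ | u
  · simp [mem_supporters, pProfile'_inl, pProfile, colEmb_apply, eq_comm, Prod.ext_iff]
  · cases u; simp [supporters, pProfile'_inr, colEmb]

lemma sum_row {k : ℕ} (i : Fin k) (μ : PV k → ℚ) :
    ∑ v ∈ Finset.univ.map (rowEmb k i), μ v = ∑ j : Fin k, μ (Sum.inl (i, j)) :=
  Finset.sum_map _ _ _

lemma sum_col {k : ℕ} (j : Fin k) (μ : PV k → ℚ) :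
    ∑ v ∈ Finset.univ.map (colEmb k j), μ v = ∑ i : Fin k, μ (Sum.inl (i, j)) :=
  Finset.sum_map _ _ _

end PhragAux
namespace PhragAux

lemma sum_ite_lt (a b : ℚ) {m k : ℕ} (hm : m ≤ k) :
    ∑ i ∈ Finset.range k, (if i < m then a else b) = m * a + (k - m : ℕ) * b := by
  rw [Finset.range_eq_Ico, ← Finset.sum_Ico_consecutive _ (Nat.zero_le m) hm,
    Finset.sum_congr rfl (fun i hi => if_pos (Finset.mem_Ico.mp hi).2),
    Finset.sum_congr rfl
      (fun i hi => if_neg (by have := (Finset.mem_Ico.mp hi).1; omega)),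
    Finset.sum_const, Finset.sum_const]
  simp [Nat.card_Ico, nsmul_eq_mul]

lemma sum_ite_zero (a b : ℚ) {k : ℕ} (hk : 1 ≤ k) :
    ∑ i ∈ Finset.range k, (if i = 0 then a else b) = a + (k - 1 : ℕ) * b := by
  rw [Finset.range_eq_Ico, ← Finset.sum_Ico_consecutive _ (Nat.zero_le 1) hk,
    Finset.sum_congr rfl
      (fun i hi => if_pos (by have := (Finset.mem_Ico.mp hi).2; omega)),
    Finset.sum_congr rfl
      (fun i hi => if_neg (by have := (Finset.mem_Ico.mp hi).1; omega)),
    Finset.sum_const, Finset.sum_const]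
  simp [Nat.card_Ico, nsmul_eq_mul]

lemma sum_ite_zero_lt (a b c : ℚ) {m k : ℕ} (h1 : 1 ≤ m) (hm : m ≤ k) :
    ∑ i ∈ Finset.range k, (if i = 0 then a else if i < m then b else c)
      = a + (m - 1 : ℕ) * b + (k - m : ℕ) * c := by
  have hcongr : ∀ i ∈ Finset.range k, (if i = 0 then a else if i < m then b else c)
      = (if i < 1 then a else if i < m then b else c) := by
    intro i _
    rcases Nat.eq_zero_or_pos i with h | h
    · subst h; simp [h1]
    · have h0 : i ≠ 0 := by omega
      have h1' : ¬ i < 1 := by omega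
      rw [if_neg h0, if_neg h1']
  have e1 : ∑ i ∈ Finset.Ico 0 1, (if i < 1 then a else if i < m then b else c) = a := by
    rw [Finset.sum_congr rfl (fun i hi => if_pos (Finset.mem_Ico.mp hi).2),
      Finset.sum_const]
    simp
  have e2 : ∑ i ∈ Finset.Ico 1 m, (if i < 1 then a else if i < m then b else c)
      = (m - 1 : ℕ) * b := by
    rw [Finset.sum_congr rfl (fun i hi => by
        have h := Finset.mem_Ico.mp hi
        rw [if_neg (by omega : ¬ i < 1), if_pos h.2]),
      Finset.sum_const]
    simp [Nat.card_Ico, nsmul_eq_mul]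
  have e3 : ∑ i ∈ Finset.Ico m k, (if i < 1 then a else if i < m then b else c)
      = (k - m : ℕ) * c := by
    rw [Finset.sum_congr rfl (fun i hi => by
        have h := Finset.mem_Ico.mp hi
        rw [if_neg (by omega : ¬ i < 1), if_neg (by omega : ¬ i < m)]),
      Finset.sum_const]
    simp [Nat.card_Ico, nsmul_eq_mul]
  rw [Finset.sum_congr rfl hcongr, Finset.range_eq_Ico,
    ← Finset.sum_Ico_consecutive _ (Nat.zero_le 1) (h1.trans hm),
    ← Finset.sum_Ico_consecutive _ h1 hm, e1, e2, e3]
  ring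

def pB (k m : ℕ) : Finset (PCand k) :=
  (Finset.univ.filter (fun j : Fin k => (j : ℕ) < m)).image Sum.inr

def pA (k m : ℕ) : Finset (PCand k) :=
  (Finset.univ.filter (fun i : Fin k => (i : ℕ) < m)).image Sum.inl

@[simp] lemma mem_pB_inr {k m : ℕ} {j : Fin k} :
    (Sum.inr j : PCand k) ∈ pB k m ↔ (j : ℕ) < m := by simp [pB]

@[simp] lemma mem_pB_inl {k m : ℕ} {i : Fin k} :
    (Sum.inl i : PCand k) ∈ pB k m ↔ False := by simp [pB]

@[simp] lemma mem_pA_inl {k m : ℕ} {i : Fin k} :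
    (Sum.inl i : PCand k) ∈ pA k m ↔ (i : ℕ) < m := by simp [pA]

@[simp] lemma mem_pA_inr {k m : ℕ} {j : Fin k} :
    (Sum.inr j : PCand k) ∈ pA k m ↔ False := by simp [pA]

lemma pB_top (k : ℕ) : pB k k = pBset k := by
  ext c; rcases c with i | j <;> simp [pBset, Fin.is_lt]

lemma pA_top (k : ℕ) : pA k k = pAset k := by
  ext c; rcases c with i | j <;> simp [pAset, Fin.is_lt]

def pμ1 (k m : ℕ) : PV k → ℚ
  | Sum.inl p => if (p.2 : ℕ) < m then 0 else 1 / (k : ℚ)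
  | Sum.inr _ => 1 / (k : ℚ)

def pν (k : ℕ) : PV k → ℚ
  | Sum.inl p => if (p.1 : ℕ) = 0 then 0 else 1 / ((k : ℚ) + 1)
  | Sum.inr _ => 0

def pμ2 (k m : ℕ) : PV k → ℚ
  | Sum.inl p => if (p.1 : ℕ) = 0 then 1 / ((k : ℚ) * (k + 1))
      else if (p.1 : ℕ) < m then 0 else 1 / (k : ℚ)
  | Sum.inr _ => 1 / ((k : ℚ) * (k + 1))

end PhragAux
namespace PhragAux

lemma step1_run1 {k : ℕ} (hk : 0 < k) :
    PhragmenStep (pProfile k) (pTb k) (∅, fun _ => 0) (pB k 1, pμ1 k 1) := by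
  refine ⟨Sum.inr ⟨0, hk⟩, 1 / (k : ℚ), by simp,
    ⟨Sum.inl (⟨0, hk⟩, ⟨0, hk⟩), by simp [mem_supporters, pProfile]⟩, ?_, ?_, ?_, ?_, ?_⟩
  · rw [supB, sum_col]
    simp
  · intro d _ _
    rcases d with i | j
    · rw [supA, sum_row]; simp
    · rw [supB, sum_col]; simp
  · intro d _ _ _
    simp [pTb]
  · show pB k 1 = insert _ ∅
    ext c
    rcases c with i | j
    · simp
    · simp [Fin.ext_iff]
      try omega
  · funext v
    rcases v with ⟨i, j⟩ | u
    · by_cases hj : (j : ℕ) = 0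
      · have hcond : (Sum.inr ⟨0, hk⟩ : PCand k) ∈ pProfile k (Sum.inl (i, j)) := by
          simp [pProfile, Fin.ext_iff] <;> omega
        rw [if_pos hcond]
        simp [pμ1, hj]
      · have hcond : (Sum.inr ⟨0, hk⟩ : PCand k) ∉ pProfile k (Sum.inl (i, j)) := by
          simp [pProfile, Fin.ext_iff] <;> omega
        rw [if_neg hcond]
        simp [pμ1, hj]
    · simp [pμ1, pProfile]

lemma step_run1 {k : ℕ} (m : ℕ) (h1 : 1 ≤ m) (hm : m < k) :
    PhragmenStep (pProfile k) (pTb k) (pB k m, pμ1 k m) (pB k (m + 1), pμ1 k (m + 1)) := by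
  have hk : 0 < k := by omega
  have hk' : (0 : ℚ) < k := by exact_mod_cast hk
  have hkne : (k : ℚ) ≠ 0 := ne_of_gt hk'
  have hm' : (m : ℚ) ≤ k := by exact_mod_cast hm.le
  have hm1 : (1 : ℚ) ≤ m := by exact_mod_cast h1
  have colsum : ∀ j : Fin k, ∑ v ∈ supporters (pProfile k) (Sum.inr j), pμ1 k m v
      = if (j : ℕ) < m then 0 else 1 := by
    intro j
    rw [supB, sum_col]
    by_cases hj : (j : ℕ) < m
    · simp [pμ1, hj]
    · simp [pμ1, hj, Finset.sum_const, Finset.card_univ, nsmul_eq_mul, mul_one_div,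
        div_self hkne, mul_inv_cancel₀ hkne]
  have rowsum : ∀ i : Fin k, ∑ v ∈ supporters (pProfile k) (Sum.inl i), pμ1 k m v
      = (k - m : ℕ) * (1 / (k : ℚ)) := by
    intro i
    rw [supA, sum_row]
    simp only [pμ1]
    rw [Fin.sum_univ_eq_sum_range (fun n => if n < m then (0 : ℚ) else 1 / (k : ℚ)) k,
      sum_ite_lt _ _ hm.le]
    simp
  have numpos : (0 : ℚ) < 1 - (k - m : ℕ) * (1 / (k : ℚ)) := by
    rw [Nat.cast_sub hm.le, mul_one_div, sub_pos, div_lt_one hk']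
    linarith
  refine ⟨Sum.inr ⟨m, hm⟩, 0, by simp,
    ⟨Sum.inl (⟨0, hk⟩, ⟨m, hm⟩), by simp [mem_supporters, pProfile]⟩, ?_, ?_, ?_, ?_, ?_⟩
  · rw [colsum]
    simp
  · intro d hd hne
    rcases d with i | j
    · rw [rowsum]
      exact div_nonneg numpos.le (by positivity)
    · rw [colsum]
      apply div_nonneg _ (by positivity)
      split_ifs <;> norm_num
  · intro d hd hne heq
    rcases d with i | j
    · exfalso
      rw [rowsum, supA, Finset.card_map, Finset.card_univ, Fintype.card_fin] at heq
      exact absurd heq (ne_of_gt (div_pos numpos hk'))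
    · simp only [mem_pB_inr] at hd
      simp [pTb]
      omega
  · show pB k (m + 1) = insert _ (pB k m)
    ext c
    rcases c with i | j
    · simp
    · simp [Fin.ext_iff]
      try omega
  · funext v
    rcases v with ⟨i, j⟩ | u
    · by_cases hj : (j : ℕ) = m
      · have hcond : (Sum.inr ⟨m, hm⟩ : PCand k) ∈ pProfile k (Sum.inl (i, j)) := by
          simp [pProfile, Fin.ext_iff] <;> omega
        rw [if_pos hcond]
        simp [pμ1, hj]
      · have hcond : (Sum.inr ⟨m, hm⟩ : PCand k) ∉ pProfile k (Sum.inl (i, j)) := by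
          simp [pProfile, Fin.ext_iff] <;> omega
        rw [if_neg hcond, add_zero]
        have hiff : ((j : ℕ) < m + 1) ↔ ((j : ℕ) < m) := by omega
        simp only [pμ1, hiff]
    · simp [pμ1, pProfile]

lemma run1 {k : ℕ} (hk : 0 < k) :
    ∀ m, 1 ≤ m → m ≤ k → PhragmenChain (pProfile k) (pTb k) m (pB k m, pμ1 k m) := by
  intro m
  induction m with
  | zero => intro h; omega
  | succ n ih =>
    intro _ hm
    rcases Nat.eq_zero_or_pos n with h | h
    · subst h
      exact ⟨(∅, fun _ => 0), ⟨rfl, rfl⟩, step1_run1 hk⟩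
    · exact ⟨_, ih h (by omega), step_run1 n h (by omega)⟩

end PhragAux
namespace PhragAux

lemma step1_run2 {k : ℕ} (hk : 0 < k) :
    PhragmenStep (pProfile' k hk) (pTb k) (∅, fun _ => 0) (pA k 1, pν k) := by
  have hk' : (0 : ℚ) < k := by exact_mod_cast hk
  have hk1 : (0 : ℚ) < (k : ℚ) + 1 := by positivity
  have cardA0 : (supporters (pProfile' k hk) (Sum.inl ⟨0, hk⟩)).card = k + 1 := by
    rw [supA'0, Finset.card_insert_of_notMem (by simp [rowEmb_apply]), Finset.card_map,
      Finset.card_univ, Fintype.card_fin]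
  refine ⟨Sum.inl ⟨0, hk⟩, 1 / ((k : ℚ) + 1), by simp,
    ⟨Sum.inr (), by simp [supporters, pProfile'_inr]⟩, ?_, ?_, ?_, ?_, ?_⟩
  · rw [cardA0]
    push_cast
    simp
  · intro d hd hne
    rcases d with i | j
    · by_cases hi : (i : ℕ) = 0
      · have hi' : i = ⟨0, hk⟩ := by simp [Fin.ext_iff, hi]
        subst hi'
        rw [cardA0]
        push_cast
        simp
      · rw [supA' hk i hi, sum_row]
        simp only [Finset.sum_const_zero]
        rw [Finset.card_map, Finset.card_univ, Fintype.card_fin]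
        rw [sub_zero]
        apply one_div_le_one_div_of_le hk'
        linarith
    · rw [supB' hk j, sum_col]
      simp only [Finset.sum_const_zero]
      rw [Finset.card_map, Finset.card_univ, Fintype.card_fin, sub_zero]
      apply one_div_le_one_div_of_le hk'
      linarith
  · intro d hd hne heq
    rcases d with i | j
    · simp [pTb]
    · exfalso
      rw [supB' hk j, sum_col] at heq
      simp only [Finset.sum_const_zero] at heq
      rw [Finset.card_map, Finset.card_univ, Fintype.card_fin, sub_zero] at heq
      have hkk : (k : ℚ) ≠ 0 := ne_of_gt hk'
      have hkk1 : (k : ℚ) + 1 ≠ 0 := ne_of_gt hk1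
      field_simp at heq
      linarith
  · show pA k 1 = insert _ ∅
    ext c
    rcases c with i | j
    · simp [Fin.ext_iff]
      try omega
    · simp
  · funext v
    rcases v with ⟨i, j⟩ | u
    · by_cases hi : (i : ℕ) = 0
      · have hcond : (Sum.inl ⟨0, hk⟩ : PCand k) ∈ pProfile' k hk (Sum.inl (i, j)) := by
          rw [pProfile'_inl]
          simp [pProfile, Fin.ext_iff] <;> omega
        rw [if_pos hcond]
        simp [pν, hi]
      · have hcond : (Sum.inl ⟨0, hk⟩ : PCand k) ∉ pProfile' k hk (Sum.inl (i, j)) := by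
          rw [pProfile'_inl]
          simp [pProfile, Fin.ext_iff] <;> omega
        rw [if_neg hcond]
        simp [pν, hi]
    · cases u
      have hcond : (Sum.inl ⟨0, hk⟩ : PCand k) ∈ pProfile' k hk (Sum.inr ()) := by
        rw [pProfile'_inr]
        simp
      rw [if_pos hcond]
      simp [pν]

lemma step2_run2 {k : ℕ} (hk : 0 < k) (hk2 : 1 < k) :
    PhragmenStep (pProfile' k hk) (pTb k) (pA k 1, pν k) (pA k 2, pμ2 k 2) := by
  have hk' : (0 : ℚ) < k := by exact_mod_cast hk
  have hk2' : (1 : ℚ) < k := by exact_mod_cast hk2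
  have hk1 : (0 : ℚ) < (k : ℚ) + 1 := by positivity
  have hkk : (k : ℚ) ≠ 0 := ne_of_gt hk'
  have hkk1 : (k : ℚ) + 1 ≠ 0 := ne_of_gt hk1
  have rowsum : ∀ i : Fin k, (i : ℕ) ≠ 0 →
      ∑ v ∈ supporters (pProfile' k hk) (Sum.inl i), pν k v
        = (k : ℚ) * (1 / ((k : ℚ) + 1)) := by
    intro i hi
    rw [supA' hk i hi, sum_row]
    simp [pν, hi, Finset.sum_const, Finset.card_univ, nsmul_eq_mul]
  have colsum : ∀ j : Fin k,
      ∑ v ∈ supporters (pProfile' k hk) (Sum.inr j), pν k v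
        = (k - 1 : ℕ) * (1 / ((k : ℚ) + 1)) := by
    intro j
    rw [supB' hk j, sum_col]
    simp only [pν]
    rw [Fin.sum_univ_eq_sum_range (fun n => if n = 0 then (0 : ℚ) else 1 / ((k : ℚ) + 1)) k,
      sum_ite_zero _ _ hk]
    simp
  have heqrow : (1 - (k : ℚ) * (1 / ((k : ℚ) + 1))) / (k : ℚ)
      = 1 / ((k : ℚ) * ((k : ℚ) + 1)) := by
    field_simp
    ring
  have heqcol : (1 - ((k - 1 : ℕ) : ℚ) * (1 / ((k : ℚ) + 1))) / (k : ℚ)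
      = 2 / ((k : ℚ) * ((k : ℚ) + 1)) := by
    rw [Nat.cast_sub hk]
    field_simp
    ring
  refine ⟨Sum.inl ⟨1, hk2⟩, 1 / ((k : ℚ) * ((k : ℚ) + 1)), by simp,
    ⟨Sum.inl (⟨1, hk2⟩, ⟨0, hk⟩), by
      rw [supA' hk ⟨1, hk2⟩ (by simp)]
      simp [rowEmb_apply]⟩, ?_, ?_, ?_, ?_, ?_⟩
  · rw [rowsum ⟨1, hk2⟩ (by simp), supA' hk ⟨1, hk2⟩ (by simp), Finset.card_map,
      Finset.card_univ, Fintype.card_fin, heqrow]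
  · intro d hd hne
    rcases d with i | j
    · simp only [mem_pA_inl] at hd
      have hi : (i : ℕ) ≠ 0 := by omega
      rw [rowsum i hi, supA' hk i hi, Finset.card_map, Finset.card_univ, Fintype.card_fin,
        heqrow]
    · rw [colsum j, supB' hk j, Finset.card_map, Finset.card_univ, Fintype.card_fin, heqcol]
      rw [div_le_div_iff₀ (by positivity) (by positivity)]
      nlinarith
  · intro d hd hne heq
    rcases d with i | j
    · simp only [mem_pA_inl] at hd
      simp [pTb]
      omega
    · exfalso
      rw [colsum j, supB' hk j, Finset.card_map, Finset.card_univ, Fintype.card_fin,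
        heqcol] at heq
      have h2 : (0 : ℚ) < (k : ℚ) * ((k : ℚ) + 1) := by positivity
      rw [div_eq_div_iff h2.ne' h2.ne'] at heq
      nlinarith
  · show pA k 2 = insert _ (pA k 1)
    ext c
    rcases c with i | j
    · simp [Fin.ext_iff]
      omega
    · simp
  · funext v
    rcases v with ⟨i, j⟩ | u
    · by_cases hi : (i : ℕ) = 1
      · have hcond : (Sum.inl ⟨1, hk2⟩ : PCand k) ∈ pProfile' k hk (Sum.inl (i, j)) := by
          rw [pProfile'_inl]
          simp [pProfile, Fin.ext_iff] <;> omega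
        rw [if_pos hcond]
        simp [pμ2, hi]
      · have hcond : (Sum.inl ⟨1, hk2⟩ : PCand k) ∉ pProfile' k hk (Sum.inl (i, j)) := by
          rw [pProfile'_inl]
          simp [pProfile, Fin.ext_iff] <;> omega
        rw [if_neg hcond]
        by_cases hi0 : (i : ℕ) = 0
        · simp [pμ2, pν, hi0]
        · have hge : ¬ (i : ℕ) < 2 := by omega
          simp only [pμ2, pν, hi0, if_neg hi0, if_neg hge, if_false]
          field_simp
          try ring
    · cases u
      have hcond : (Sum.inl ⟨1, hk2⟩ : PCand k) ∉ pProfile' k hk (Sum.inr ()) := by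
        rw [pProfile'_inr]
        simp [Fin.ext_iff]
      rw [if_neg hcond]
      simp [pμ2, pν]

lemma stepm_run2 {k : ℕ} (hk : 0 < k) (m : ℕ) (h2 : 2 ≤ m) (hm : m < k) :
    PhragmenStep (pProfile' k hk) (pTb k) (pA k m, pμ2 k m) (pA k (m + 1), pμ2 k (m + 1)) := by
  have hk' : (0 : ℚ) < k := by exact_mod_cast hk
  have hkk : (k : ℚ) ≠ 0 := ne_of_gt hk'
  have hk1 : (0 : ℚ) < (k : ℚ) + 1 := by positivity
  have hm2 : (2 : ℚ) ≤ (m : ℚ) := by exact_mod_cast h2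
  have hmk : (m : ℚ) ≤ (k : ℚ) := by exact_mod_cast hm.le
  have rowsum : ∀ i : Fin k, ¬ (i : ℕ) < m →
      ∑ v ∈ supporters (pProfile' k hk) (Sum.inl i), pμ2 k m v = 1 := by
    intro i hi
    have hi0 : (i : ℕ) ≠ 0 := by omega
    rw [supA' hk i hi0, sum_row]
    simp [pμ2, hi0, hi, Finset.sum_const, Finset.card_univ, nsmul_eq_mul,
      mul_one_div, div_self hkk, mul_inv_cancel₀ hkk]
  have colsum : ∀ j : Fin k,
      ∑ v ∈ supporters (pProfile' k hk) (Sum.inr j), pμ2 k m v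
        = 1 / ((k : ℚ) * ((k : ℚ) + 1)) + (k - m : ℕ) * (1 / (k : ℚ)) := by
    intro j
    rw [supB' hk j, sum_col]
    simp only [pμ2]
    rw [Fin.sum_univ_eq_sum_range
        (fun n => if n = 0 then 1 / ((k : ℚ) * ((k : ℚ) + 1))
          else if n < m then 0 else 1 / (k : ℚ)) k,
      sum_ite_zero_lt _ _ _ (by omega) hm.le]
    simp
  have key : (0 : ℚ) < 1 - (1 / ((k : ℚ) * ((k : ℚ) + 1)) + ((k - m : ℕ) : ℚ) * (1 / (k : ℚ))) := by
    have e : 1 - (1 / ((k : ℚ) * ((k : ℚ) + 1)) + ((k - m : ℕ) : ℚ) * (1 / (k : ℚ)))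
        = ((m : ℚ) * ((k : ℚ) + 1) - 1) / ((k : ℚ) * ((k : ℚ) + 1)) := by
      rw [Nat.cast_sub hm.le]
      field_simp
      ring
    rw [e]
    apply div_pos _ (by positivity)
    nlinarith
  refine ⟨Sum.inl ⟨m, hm⟩, 0, by simp,
    ⟨Sum.inl (⟨m, hm⟩, ⟨0, hk⟩), by
      rw [supA' hk ⟨m, hm⟩ (by simp; omega)]
      simp [rowEmb_apply]⟩, ?_, ?_, ?_, ?_, ?_⟩
  · rw [rowsum ⟨m, hm⟩ (by simp)]
    simp
  · intro d hd hne
    rcases d with i | j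
    · simp only [mem_pA_inl] at hd
      rw [rowsum i hd]
      simp
    · rw [colsum j]
      exact div_nonneg key.le (by positivity)
  · intro d hd hne heq
    rcases d with i | j
    · simp only [mem_pA_inl] at hd
      simp [pTb]
      omega
    · exfalso
      rw [colsum j, supB' hk j, Finset.card_map, Finset.card_univ, Fintype.card_fin] at heq
      exact absurd heq (ne_of_gt (div_pos key hk'))
  · show pA k (m + 1) = insert _ (pA k m)
    ext c
    rcases c with i | j
    · simp [Fin.ext_iff]
      omega
    · simp
  · funext v
    rcases v with ⟨i, j⟩ | u
    · by_cases hi : (i : ℕ) = m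
      · have hcond : (Sum.inl ⟨m, hm⟩ : PCand k) ∈ pProfile' k hk (Sum.inl (i, j)) := by
          rw [pProfile'_inl]
          simp [pProfile, Fin.ext_iff] <;> omega
        rw [if_pos hcond]
        have hi0 : (i : ℕ) ≠ 0 := by omega
        have hm0 : m ≠ 0 := by omega
        simp [pμ2, hi0, hi, hm0]
      · have hcond : (Sum.inl ⟨m, hm⟩ : PCand k) ∉ pProfile' k hk (Sum.inl (i, j)) := by
          rw [pProfile'_inl]
          simp [pProfile, Fin.ext_iff] <;> omega
        rw [if_neg hcond, add_zero]
        have hiff : ((i : ℕ) < m + 1) ↔ ((i : ℕ) < m) := by omega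
        simp only [pμ2, hiff]
    · cases u
      have hcond : (Sum.inl ⟨m, hm⟩ : PCand k) ∉ pProfile' k hk (Sum.inr ()) := by
        rw [pProfile'_inr]
        simp [Fin.ext_iff]
        omega
      rw [if_neg hcond]
      simp [pμ2]

lemma run2a {k : ℕ} (hk : 0 < k) :
    PhragmenChain (pProfile' k hk) (pTb k) 1 (pA k 1, pν k) :=
  ⟨(∅, fun _ => 0), ⟨rfl, rfl⟩, step1_run2 hk⟩

lemma run2b {k : ℕ} (hk : 0 < k) :
    ∀ m, 2 ≤ m → m ≤ k → PhragmenChain (pProfile' k hk) (pTb k) m (pA k m, pμ2 k m) := by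
  intro m
  induction m with
  | zero => intro h; omega
  | succ n ih =>
    intro h2 hm
    rcases Nat.lt_or_ge n 2 with h | h
    · have hn : n = 1 := by omega
      subst hn
      exact ⟨(pA k 1, pν k), run2a hk, step2_run2 hk (by omega)⟩
    · exact ⟨_, ih h (by omega), stepm_run2 hk n h (by omega)⟩

end PhragAux
namespace PhragAux

lemma step_det {V C : Type*} [Fintype V] [DecidableEq C] {A : V → Finset C} {tb : C → ℕ}
    (htb : Function.Injective tb) {s s1 s2 : Finset C × (V → ℚ)}
    (h1 : PhragmenStep A tb s s1) (h2 : PhragmenStep A tb s s2) : s1 = s2 := by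
  obtain ⟨c1, δ1, hc1, hne1, hδ1, hmin1, htie1, hS1, hμ1⟩ := h1
  obtain ⟨c2, δ2, hc2, hne2, hδ2, hmin2, htie2, hS2, hμ2⟩ := h2
  have hδle : δ1 ≤ δ2 := by rw [hδ2]; exact hmin1 c2 hc2 hne2
  have hδle' : δ2 ≤ δ1 := by rw [hδ1]; exact hmin2 c1 hc1 hne1
  have hδ : δ1 = δ2 := le_antisymm hδle hδle'
  have h12 : tb c1 ≤ tb c2 := htie1 c2 hc2 hne2 (by rw [← hδ2]; exact hδ.symm)
  have h21 : tb c2 ≤ tb c1 := htie2 c1 hc1 hne1 (by rw [← hδ1]; exact hδ)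
  have hc : c1 = c2 := htb (le_antisymm h12 h21)
  apply Prod.ext
  · rw [hS1, hS2, hc]
  · rw [hμ1, hμ2, hc, hδ]

lemma chain_det {V C : Type*} [Fintype V] [DecidableEq C] {A : V → Finset C} {tb : C → ℕ}
    (htb : Function.Injective tb) :
    ∀ n (s1 s2 : Finset C × (V → ℚ)), PhragmenChain A tb n s1 → PhragmenChain A tb n s2 →
      s1 = s2 := by
  intro n
  induction n with
  | zero =>
    rintro s1 s2 ⟨h1, h1'⟩ ⟨h2, h2'⟩
    apply Prod.ext
    · rw [h1, h2]
    · rw [h1', h2']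
  | succ n ih =>
    rintro s1 s2 ⟨t1, hc1, hs1⟩ ⟨t2, hc2, hs2⟩
    cases ih t1 t2 hc1 hc2
    exact step_det htb hs1 hs2

lemma pTb_inj (k : ℕ) : Function.Injective (pTb k) := by
  rintro (i | i) (j | j) h <;> simp only [pTb, Sum.elim_inl, Sum.elim_inr] at h
  · exact congrArg Sum.inl (Fin.ext (by omega))
  · exact absurd h (by have := j.isLt; omega)
  · exact absurd h (by have := i.isLt; omega)
  · exact congrArg Sum.inr (Fin.ext h)

end PhragAux

open PhragAux

/-- Phragmén's sequential rule outputs `B` on the original election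
and `A` after a single added approval; `A` and `B` are disjoint, hence Phragmén
is `k`-Add-robust. -/
theorem phragmen_k_add_robust (k : ℕ) (hk : 0 < k) :
    (∃ μ : ((Fin k × Fin k) ⊕ Unit) → ℚ,
      PhragmenChain (pProfile k) (pTb k) k (pBset k, μ)) ∧
    (∀ (W : Finset (PCand k)) (μ : ((Fin k × Fin k) ⊕ Unit) → ℚ),
      PhragmenChain (pProfile k) (pTb k) k (W, μ) → W = pBset k) ∧
    (∃ μ : ((Fin k × Fin k) ⊕ Unit) → ℚ,
      PhragmenChain (pProfile' k hk) (pTb k) k (pAset k, μ)) ∧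
    (∀ (W : Finset (PCand k)) (μ : ((Fin k × Fin k) ⊕ Unit) → ℚ),
      PhragmenChain (pProfile' k hk) (pTb k) k (W, μ) → W = pAset k) ∧
    Disjoint (pAset k) (pBset k) := by
  have hB : PhragmenChain (pProfile k) (pTb k) k (pBset k, pμ1 k k) := by
    rw [← pB_top k]
    exact run1 hk k hk le_rfl
  have hA : ∃ μA, PhragmenChain (pProfile' k hk) (pTb k) k (pAset k, μA) := by
    rcases Nat.lt_or_ge k 2 with h | h
    · have hk1 : k = 1 := by omega
      subst hk1
      refine ⟨pν 1, ?_⟩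
      rw [← pA_top 1]
      exact run2a hk
    · refine ⟨pμ2 k k, ?_⟩
      rw [← pA_top k]
      exact run2b hk k h le_rfl
  obtain ⟨μA, hA⟩ := hA
  refine ⟨⟨pμ1 k k, hB⟩, ?_, ⟨μA, hA⟩, ?_, ?_⟩
  · intro W μ h
    have := chain_det (pTb_inj k) k _ _ h hB
    exact congrArg Prod.fst this
  · intro W μ h
    have := chain_det (pTb_inj k) k _ _ h hA
    exact congrArg Prod.fst this
  · rw [Finset.disjoint_left]
    rintro c hc hc'
    simp only [pAset, pBset, Finset.mem_image, Finset.mem_univ, true_and] at hc hc'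
    obtain ⟨i, rfl⟩ := hc
    obtain ⟨j, hj⟩ := hc'
    exact absurd hj (by simp)
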